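/- Let d ≥ 1 and s ∈ (0,1). There exists C > 0 depending only on d and s such that for all ε ∈ (0,1], ∫_{ℝ^d} M₁(v) ε²|v|² (1+ε²|v|²)^{-1} dv ≤ C ε^{2s}. -/
import Mathlib

open MeasureTheory Real

/-- The heavy-tailed equilibrium `M₁(v) = c ⟨v⟩^{-(d+2s)}` with normalizing constant `c`. -/
noncomputable def M1 (d : ℕ) (s c : ℝ) (v : EuclideanSpace ℝ (Fin d)) : ℝ :=
  c * (1 + ‖v‖ ^ 2) ^ (-((d : ℝ) + 2 * s) / 2)

/-- `∫ M₁(v) ε²|v|² ⟨εv⟩⁻² dv ≤ C ε^{2s}` uniformly for `ε ∈ (0,1]`. -/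
theorem twisted_mass_defect_bound
    (d : ℕ) (hd : 1 ≤ d) (s : ℝ) (hs0 : 0 < s) (hs1 : s < 1)
    (c : ℝ) (hc : 0 < c) (hM : ∫ v, M1 d s c v = 1) :
    ∃ C > 0, ∀ ε ∈ Set.Ioc (0 : ℝ) 1,
      ∫ v, M1 d s c v * (ε ^ 2 * ‖v‖ ^ 2) * (1 + ε ^ 2 * ‖v‖ ^ 2)⁻¹ ≤
        C * ε ^ (2 * s) := by
  classical
  set E := EuclideanSpace ℝ (Fin d)
  have hdim : Module.finrank ℝ E = d := by
    simp [E, finrank_euclideanSpace]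
  haveI : Nontrivial E := by
    have : 0 < Module.finrank ℝ E := by omega
    exact Module.nontrivial_of_finrank_pos this
  set κ := (volume (Metric.ball (0 : E) 1)).toReal with hκ
  have hκpos : 0 < κ :=
    ENNReal.toReal_pos (Metric.measure_ball_pos _ _ one_pos).ne' measure_ball_lt_top.ne
  have hdpos : (0 : ℝ) < d := by exact_mod_cast hd
  have h2s : (0 : ℝ) < 2 * s := by linarith
  have h22s : (0 : ℝ) < 2 - 2 * s := by linarith
  refine ⟨(d : ℝ) * κ * (c * (1 / (2 - 2 * s)) + c * (1 / (2 * s))), by positivity, ?_⟩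
  intro ε hε
  obtain ⟨hε0, hε1⟩ := hε
  -- continuity / measurability facts
  have hcontM : Continuous (M1 d s c) := by
    have hb : Continuous fun v : E => 1 + ‖v‖ ^ 2 := continuous_const.add (continuous_norm.pow 2)
    exact continuous_const.mul (hb.rpow_const fun v => Or.inl (by positivity))
  have hM1nonneg : ∀ v : E, 0 ≤ M1 d s c v := fun v => by
    unfold M1; positivity
  have hMint : Integrable (M1 d s c) := by
    by_contra h
    rw [integral_undef h] at hM
    norm_num at hM
  -- the dominating function
  set g : E → ℝ := fun v => M1 d s c v * min 1 (ε ^ 2 * ‖v‖ ^ 2) with hg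
  have hgcont : Continuous g := by
    exact hcontM.mul (continuous_const.min (continuous_const.mul (continuous_norm.pow 2)))
  have hgint : Integrable g := by
    refine hMint.mono hgcont.aestronglyMeasurable (Filter.Eventually.of_forall fun v => ?_)
    have h0 : 0 ≤ min 1 (ε ^ 2 * ‖v‖ ^ 2) := le_min one_pos.le (by positivity)
    have h1 : min 1 (ε ^ 2 * ‖v‖ ^ 2) ≤ 1 := min_le_left _ _
    rw [Real.norm_eq_abs, Real.norm_eq_abs, abs_of_nonneg (mul_nonneg (hM1nonneg v) h0),
      abs_of_nonneg (hM1nonneg v)]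
    exact mul_le_of_le_one_right (hM1nonneg v) h1
  -- step 1: pointwise bound
  have step1 : ∫ v, M1 d s c v * (ε ^ 2 * ‖v‖ ^ 2) * (1 + ε ^ 2 * ‖v‖ ^ 2)⁻¹ ≤ ∫ v, g v := by
    refine integral_mono_of_nonneg (Filter.Eventually.of_forall fun v =>
      mul_nonneg (mul_nonneg (hM1nonneg v) (by positivity)) (by positivity)) hgint
      (Filter.Eventually.of_forall fun v => ?_)
    have hx : (0 : ℝ) ≤ ε ^ 2 * ‖v‖ ^ 2 := by positivity
    set x := ε ^ 2 * ‖v‖ ^ 2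
    have h1x : (0 : ℝ) < 1 + x := by linarith
    have key : x * (1 + x)⁻¹ ≤ min 1 x := by
      refine le_min ?_ ?_
      · rw [← div_eq_mul_inv]
        exact div_le_one_of_le₀ (by linarith) h1x.le
      · exact mul_le_of_le_one_right hx (inv_le_one_of_one_le₀ (by linarith))
    calc M1 d s c v * x * (1 + x)⁻¹ = M1 d s c v * (x * (1 + x)⁻¹) := by ring
      _ ≤ M1 d s c v * min 1 x := mul_le_mul_of_nonneg_left key (hM1nonneg v)
  -- step 2: polar coordinates
  set G : ℝ → ℝ := fun r => c * (1 + r ^ 2) ^ (-((d : ℝ) + 2 * s) / 2) * min 1 (ε ^ 2 * r ^ 2)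
    with hG
  have hpolar : ∫ v, g v =
      (Module.finrank ℝ E) • κ • ∫ r in Set.Ioi (0 : ℝ), r ^ (Module.finrank ℝ E - 1) • G r := by
    exact integral_fun_norm_addHaar volume G
  -- radial pieces
  set R : ℝ := ε⁻¹ with hR
  have hRpos : 0 < R := inv_pos.2 hε0
  set H : ℝ → ℝ := fun r => r ^ (d - 1) • G r with hH
  have hGcont : Continuous G := by
    have hb : Continuous fun r : ℝ => 1 + r ^ 2 := continuous_const.add (continuous_pow 2)
    exact (continuous_const.mul (hb.rpow_const fun r => Or.inl (by positivity))).mul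
      (continuous_const.min (continuous_const.mul (continuous_pow 2)))
  have hHcont : Continuous H := (continuous_pow _).smul hGcont
  -- pointwise bounds on the pieces
  have hbase : ∀ r : ℝ, 0 < r →
      (1 + r ^ 2) ^ (-((d : ℝ) + 2 * s) / 2) ≤ r ^ (-((d : ℝ) + 2 * s)) := by
    intro r hr
    have h1 : (1 + r ^ 2) ^ (-((d : ℝ) + 2 * s) / 2) ≤ (r ^ 2) ^ (-((d : ℝ) + 2 * s) / 2) := by
      apply Real.rpow_le_rpow_of_nonpos (by positivity) (by linarith)
      have : (0 : ℝ) < (d : ℝ) + 2 * s := by linarith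
      linarith [div_pos this two_pos]
    calc (1 + r ^ 2) ^ (-((d : ℝ) + 2 * s) / 2) ≤ (r ^ 2) ^ (-((d : ℝ) + 2 * s) / 2) := h1
      _ = r ^ (-((d : ℝ) + 2 * s)) := by
        rw [← Real.rpow_natCast r 2, ← Real.rpow_mul hr.le]
        congr 1
        ring
  have hpow : ∀ r : ℝ, 0 < r → (r : ℝ) ^ (d - 1) = r ^ ((d : ℝ) - 1) := by
    intro r hr
    rw [← Real.rpow_natCast r (d - 1), Nat.cast_sub hd, Nat.cast_one]
  have hGnonneg : ∀ r : ℝ, 0 ≤ G r := fun r => by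
    have : 0 ≤ min 1 (ε ^ 2 * r ^ 2) := le_min one_pos.le (by positivity)
    have hb : (0:ℝ) < 1 + r ^ 2 := by positivity
    have := Real.rpow_nonneg hb.le (-((d : ℝ) + 2 * s) / 2)
    positivity
  -- near part bound
  have hnear_pt : ∀ r ∈ Set.Ioc (0 : ℝ) R, H r ≤ c * ε ^ 2 * r ^ (1 - 2 * s) := by
    intro r hr
    have hr0 : 0 < r := hr.1
    have hmin : min 1 (ε ^ 2 * r ^ 2) ≤ ε ^ 2 * r ^ 2 := min_le_right _ _
    have h1 : H r ≤ r ^ ((d : ℝ) - 1) * (c * (r ^ (-((d : ℝ) + 2 * s))) * (ε ^ 2 * r ^ 2)) := by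
      simp only [hH, smul_eq_mul]
      rw [hpow r hr0]
      have hrp : (0:ℝ) ≤ r ^ ((d : ℝ) - 1) := Real.rpow_nonneg hr0.le _
      refine mul_le_mul_of_nonneg_left ?_ hrp
      have := hbase r hr0
      calc c * (1 + r ^ 2) ^ (-((d : ℝ) + 2 * s) / 2) * min 1 (ε ^ 2 * r ^ 2)
          ≤ c * (r ^ (-((d : ℝ) + 2 * s))) * (ε ^ 2 * r ^ 2) := by
            apply mul_le_mul (mul_le_mul_of_nonneg_left this hc.le) hmin
              (le_min one_pos.le (by positivity)) (by positivity)
        _ = c * (r ^ (-((d : ℝ) + 2 * s))) * (ε ^ 2 * r ^ 2) := rfl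
    refine h1.trans (le_of_eq ?_)
    rw [← Real.rpow_natCast r 2]
    have hcomb : r ^ ((d : ℝ) - 1) * r ^ (-((d : ℝ) + 2 * s)) * r ^ ((2 : ℕ) : ℝ)
        = r ^ (1 - 2 * s) := by
      rw [← Real.rpow_add hr0, ← Real.rpow_add hr0]
      congr 1
      push_cast
      ring
    linear_combination (c * ε ^ 2) * hcomb
  -- far part bound
  have hfar_pt : ∀ r ∈ Set.Ioi R, H r ≤ c * r ^ (-(1 + 2 * s)) := by
    intro r hr
    have hr0 : 0 < r := hRpos.trans hr
    have hmin : min 1 (ε ^ 2 * r ^ 2) ≤ 1 := min_le_left _ _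
    have h1 : H r ≤ r ^ ((d : ℝ) - 1) * (c * (r ^ (-((d : ℝ) + 2 * s)))) := by
      simp only [hH, smul_eq_mul]
      rw [hpow r hr0]
      have hrp : (0:ℝ) ≤ r ^ ((d : ℝ) - 1) := Real.rpow_nonneg hr0.le _
      refine mul_le_mul_of_nonneg_left ?_ hrp
      calc c * (1 + r ^ 2) ^ (-((d : ℝ) + 2 * s) / 2) * min 1 (ε ^ 2 * r ^ 2)
          ≤ c * (1 + r ^ 2) ^ (-((d : ℝ) + 2 * s) / 2) * 1 := by
            apply mul_le_mul_of_nonneg_left hmin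
            have hb : (0:ℝ) < 1 + r ^ 2 := by positivity
            have := Real.rpow_nonneg hb.le (-((d : ℝ) + 2 * s) / 2)
            positivity
        _ = c * (1 + r ^ 2) ^ (-((d : ℝ) + 2 * s) / 2) := mul_one _
        _ ≤ c * (r ^ (-((d : ℝ) + 2 * s))) :=
            mul_le_mul_of_nonneg_left (hbase r hr0) hc.le
    refine h1.trans (le_of_eq ?_)
    have hcomb : r ^ ((d : ℝ) - 1) * r ^ (-((d : ℝ) + 2 * s)) = r ^ (-(1 + 2 * s)) := by
      rw [← Real.rpow_add hr0]
      congr 1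
      ring
    linear_combination c * hcomb
  -- integrability of the pieces
  have hint_near : IntegrableOn H (Set.Ioc 0 R) := hHcont.integrableOn_Ioc
  have hint_far_bound : IntegrableOn (fun r : ℝ => c * r ^ (-(1 + 2 * s))) (Set.Ioi R) :=
    (integrableOn_Ioi_rpow_of_lt (by linarith) hRpos).const_mul c
  have hint_far : IntegrableOn H (Set.Ioi R) := by
    refine Integrable.mono' hint_far_bound hHcont.aestronglyMeasurable ?_
    refine (ae_restrict_iff' measurableSet_Ioi).2 (Filter.Eventually.of_forall fun r hr => ?_)
    rw [Real.norm_eq_abs, abs_of_nonneg]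
    · exact hfar_pt r hr
    · simp only [hH, smul_eq_mul]
      exact mul_nonneg (pow_nonneg (hRpos.trans hr).le _) (hGnonneg r)
  have hint_near_bound : IntegrableOn (fun r : ℝ => c * ε ^ 2 * r ^ (1 - 2 * s)) (Set.Ioc 0 R) := by
    exact Integrable.const_mul ((intervalIntegrable_iff_integrableOn_Ioc_of_le hRpos.le).1
      (intervalIntegral.intervalIntegrable_rpow' (by linarith))) _
  -- algebraic identities in ε
  have hRe : ∀ t : ℝ, R ^ t = ε ^ (-t) := by
    intro t
    rw [hR, ← Real.rpow_neg_one ε, ← Real.rpow_mul hε0.le, neg_one_mul]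
  have heps2 : (ε : ℝ) ^ (2 : ℕ) = ε ^ (2 : ℝ) := by
    rw [← Real.rpow_natCast ε 2]; norm_num
  -- bound the near piece
  have hnear : ∫ r in Set.Ioc (0:ℝ) R, H r ≤ c * (1 / (2 - 2 * s)) * ε ^ (2 * s) := by
    have h1 : ∫ r in Set.Ioc (0:ℝ) R, H r ≤ ∫ r in Set.Ioc (0:ℝ) R, c * ε ^ 2 * r ^ (1 - 2 * s) :=
      setIntegral_mono_on hint_near hint_near_bound measurableSet_Ioc hnear_pt
    refine h1.trans (le_of_eq ?_)
    rw [integral_const_mul, ← intervalIntegral.integral_of_le hRpos.le,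
      integral_rpow (Or.inl (by linarith)), Real.zero_rpow (by intro h; nlinarith), sub_zero]
    have h2 : (1 : ℝ) - 2 * s + 1 = 2 - 2 * s := by ring
    rw [h2, hRe (2 - 2 * s), heps2]
    have h4 : ε ^ (2 : ℝ) * ε ^ (-(2 - 2 * s)) = ε ^ (2 * s) := by
      rw [← Real.rpow_add hε0]; congr 1; ring
    linear_combination (c / (2 - 2 * s)) * h4
  -- bound the far piece
  have hfar : ∫ r in Set.Ioi R, H r ≤ c * (1 / (2 * s)) * ε ^ (2 * s) := by
    have h1 : ∫ r in Set.Ioi R, H r ≤ ∫ r in Set.Ioi R, c * r ^ (-(1 + 2 * s)) :=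
      setIntegral_mono_on hint_far hint_far_bound measurableSet_Ioi
        (fun r hr => hfar_pt r hr)
    refine h1.trans (le_of_eq ?_)
    rw [integral_const_mul, integral_Ioi_rpow_of_lt (by linarith) hRpos]
    have h2 : -(1 + 2 * s) + 1 = -(2 * s) := by ring
    rw [h2, hRe (-(2 * s)), neg_neg]
    field_simp
  -- combine
  have hIoi : Set.Ioc (0:ℝ) R ∪ Set.Ioi R = Set.Ioi 0 := Set.Ioc_union_Ioi_eq_Ioi hRpos.le
  have hsplit : ∫ r in Set.Ioi (0:ℝ), H r
      = (∫ r in Set.Ioc (0:ℝ) R, H r) + ∫ r in Set.Ioi R, H r := by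
    rw [← hIoi]
    exact setIntegral_union (Set.Ioc_disjoint_Ioi le_rfl) measurableSet_Ioi hint_near hint_far
  have hI : ∫ r in Set.Ioi (0:ℝ), H r
      ≤ (c * (1 / (2 - 2 * s)) + c * (1 / (2 * s))) * ε ^ (2 * s) := by
    rw [hsplit, add_mul]
    exact add_le_add hnear hfar
  -- finish
  refine step1.trans ?_
  rw [hpolar, hdim]
  have hHG : (∫ r in Set.Ioi (0:ℝ), r ^ (d - 1) • G r) = ∫ r in Set.Ioi (0:ℝ), H r := rfl
  rw [hHG, nsmul_eq_mul, smul_eq_mul, ← mul_assoc]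
  calc (d : ℝ) * κ * ∫ r in Set.Ioi (0:ℝ), H r
      ≤ (d : ℝ) * κ * ((c * (1 / (2 - 2 * s)) + c * (1 / (2 * s))) * ε ^ (2 * s)) :=
        mul_le_mul_of_nonneg_left hI (by positivity)
    _ = (d : ℝ) * κ * (c * (1 / (2 - 2 * s)) + c * (1 / (2 * s))) * ε ^ (2 * s) := by ring
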